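/- For φ = [[x+aw, y+bw],[z+cw, x+dw]] with a,b,c,d ∈ ℂ, the square of ε(φ) = d−a equals the determinant of the matrix of second partial derivatives (divided appropriately): (d−a)² = det [[2,0,0,a+d],[0,0,−1,−c],[0,−1,0,−b],[a+d,−c,−b,2(ad−bc)]]. That is, ε(φ)² = ρ(φ). -/

import Mathlib

open ExteriorAlgebra

noncomputable def detFamily : ∀ i : ℕ, (Fin 4 → ℂ) [⋀^Fin i]→ₗ[ℂ] ℂ
  | 4 => Matrix.detRowAlternating
  | _ => 0

lemma ι_swap (m n : Fin 4 → ℂ) :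
    ι ℂ n * ι ℂ m = -(ι ℂ m * ι ℂ n) := by
  have := ι_add_mul_swap (R := ℂ) m n
  linear_combination (norm := noncomm_ring) this

set_option maxHeartbeats 2000000 in
/-- if ε is the coefficient of x∧y∧z∧w in φ₁₁∧φ₂₂∧φ₁₂∧φ₂₁ for
φ = [[x+aw, y+bw],[z+cw, x+dw]], then ε² equals ρ(φ), the determinant of the
matrix of second partial derivatives of det(φ). -/
theorem epsilon_sq_eq_rho (a b c d : ℂ) (ε : ℂ)
    (hε :
      let V := Fin 4 → ℂ
      let x : V := Pi.single 0 1
      let y : V := Pi.single 1 1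
      let z : V := Pi.single 2 1
      let w : V := Pi.single 3 1
      ι ℂ (x + a • w) * ι ℂ (x + d • w) * ι ℂ (y + b • w) * ι ℂ (z + c • w) =
        ε • (ι ℂ x * ι ℂ y * ι ℂ z * ι ℂ w)) :
    ε ^ 2 = Matrix.det !![(2 : ℂ), 0, 0, a + d;
                          0, 0, -1, -c;
                          0, -1, 0, -b;
                          a + d, -c, -b, 2 * (a * d - b * c)] := by
  set x : Fin 4 → ℂ := Pi.single 0 1 with hx
  set y : Fin 4 → ℂ := Pi.single 1 1 with hy
  set z : Fin 4 → ℂ := Pi.single 2 1 with hz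
  set w : Fin 4 → ℂ := Pi.single 3 1 with hw
  simp only [] at hε
  -- expand the left hand side
  have key : ι ℂ (x + a • w) * ι ℂ (x + d • w) * ι ℂ (y + b • w) * ι ℂ (z + c • w)
      = (d - a) • (ι ℂ x * ι ℂ y * ι ℂ z * ι ℂ w) := by
    simp only [map_add, map_smul]
    have hxx := ι_sq_zero (R := ℂ) x
    have hww := ι_sq_zero (R := ℂ) w
    have hwx := ι_swap x w
    have hwy := ι_swap y w
    have hwz := ι_swap z w
    generalize ι ℂ x = X at *
    generalize ι ℂ y = Y at *
    generalize ι ℂ z = Z at *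
    generalize ι ℂ w = W at *
    -- now pure algebra
    have hxx' : ∀ t, X * (X * t) = 0 := fun t => by rw [← mul_assoc, hxx, zero_mul]
    have hww' : ∀ t, W * (W * t) = 0 := fun t => by rw [← mul_assoc, hww, zero_mul]
    have hwx' : ∀ t, W * (X * t) = -(X * (W * t)) := fun t => by
      rw [← mul_assoc, hwx, neg_mul, mul_assoc]
    have hwy' : ∀ t, W * (Y * t) = -(Y * (W * t)) := fun t => by
      rw [← mul_assoc, hwy, neg_mul, mul_assoc]
    have hwz' : ∀ t, W * (Z * t) = -(Z * (W * t)) := fun t => by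
      rw [← mul_assoc, hwz, neg_mul, mul_assoc]
    simp only [mul_add, add_mul, smul_mul_assoc, mul_smul_comm, mul_assoc, mul_neg, neg_mul,
      hxx, hww, hwx, hwy, hwz, hxx', hww', hwx', hwy', hwz', smul_zero, mul_zero, zero_mul,
      smul_neg, neg_neg, add_zero, zero_add, neg_zero, smul_smul]
    module
  rw [key] at hε
  -- apply the detecting linear functional
  have hB : ι ℂ x * ι ℂ y * ι ℂ z * ι ℂ w = ιMulti ℂ 4 ![x, y, z, w] := by
    rw [ιMulti_apply]
    simp [List.ofFn_succ, mul_assoc]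
  have hεda : ε = d - a := by
    have happ := congrArg (liftAlternating (R := ℂ) (M := Fin 4 → ℂ) (N := ℂ) detFamily) hε
    rw [hB, map_smul, map_smul, liftAlternating_apply_ιMulti] at happ
    have hdet : detFamily 4 ![x, y, z, w] = 1 := by
      show Matrix.detRowAlternating ![x, y, z, w] = 1
      have : (Matrix.of ![x, y, z, w]) = (1 : Matrix (Fin 4) (Fin 4) ℂ) := by
        ext i j
        fin_cases i <;> fin_cases j <;>
          simp [hx, hy, hz, hw, Matrix.one_apply, Pi.single_apply,
            Matrix.vecHead, Matrix.vecTail]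
      calc Matrix.detRowAlternating ![x, y, z, w]
          = Matrix.det (Matrix.of ![x, y, z, w]) := rfl
        _ = 1 := by rw [this, Matrix.det_one]
    rw [hdet, smul_eq_mul, smul_eq_mul, mul_one, mul_one] at happ
    exact happ.symm
  rw [hεda]
  simp [Matrix.det_succ_row_zero, Fin.sum_univ_succ,
    show ((Fin.castSucc 2 : Fin 4)) = (2 : Fin 4) from rfl,
    show (Fin.succAbove (3 : Fin 4) (2 : Fin 3)) = (2 : Fin 4) from rfl]
  ring
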